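/- For every k ≥ 1, aw(P_3 □ P_{2k+1}, 3) = 3; that is, every exact 3-coloring of the grid P_3 □ P_{2k+1} contains a rainbow 3-AP, while some exact 2-coloring does not. -/

import Mathlib

open SimpleGraph

/-- `v` lists the vertices of a `k`-term arithmetic progression in `G`:
consecutive vertices are at a common distance `d`. -/
def IsAPIn {V : Type*} (G : SimpleGraph V) (k : ℕ) (v : Fin k → V) : Prop :=
  ∃ d : ℕ, ∀ (i : ℕ) (h : i + 1 < k),
    G.dist (v ⟨i, by omega⟩) (v ⟨i + 1, h⟩) = d

/-- The coloring `c` admits a rainbow `k`-AP in `G`: a `k`-AP whose vertices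
are pairwise distinct and receive pairwise distinct colors. -/
def HasRainbowAP {V α : Type*} (G : SimpleGraph V) (k : ℕ) (c : V → α) : Prop :=
  ∃ v : Fin k → V, IsAPIn G k v ∧ Function.Injective (c ∘ v)

/-- The anti-van der Waerden number `aw(G,k)`: the least positive `r` such that
every exact `r`-coloring of `G` contains a rainbow `k`-AP.  (For `r = |V(G)|+1`
there is no surjection onto `r` colors, so the defining set is nonempty and
`aw(G,k) ≤ |V(G)|+1` automatically, matching the convention.) -/
noncomputable def aw {V : Type*} [Fintype V] (G : SimpleGraph V) (k : ℕ) : ℕ :=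
  sInf {r : ℕ | 0 < r ∧ ∀ c : V → Fin r, Function.Surjective c → HasRainbowAP G k c}


section AWProof
open Function


def nd (a b : ℕ) : ℕ := (a - b) + (b - a)

/-- Rainbow-free hypothesis, purely arithmetically: whenever `(i1,j1),(i2,j2),(i3,j3)` are
vertices of the `3 × n` grid with `d(v1,v2) = d(v2,v3)` (L1-distance), their colors are
not pairwise distinct. -/
def NR (n : ℕ) (C : ℕ → ℕ → Fin 3) : Prop :=
  ∀ i1 j1 i2 j2 i3 j3 : ℕ, i1 < 3 → i2 < 3 → i3 < 3 → j1 < n → j2 < n → j3 < n →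
    nd i1 i2 + nd j1 j2 = nd i2 i3 + nd j2 j3 →
    C i1 j1 = C i2 j2 ∨ C i2 j2 = C i3 j3 ∨ C i1 j1 = C i3 j3

def SJ (n : ℕ) (C : ℕ → ℕ → Fin 3) : Prop :=
  ∀ col : Fin 3, ∃ i j : ℕ, i < 3 ∧ j < n ∧ C i j = col

lemma third_color : ∀ (a b : Fin 3), a ≠ b → ∃ e : Fin 3, e ≠ a ∧ e ≠ b := by decide

lemma two_colors_contra {n : ℕ} {C : ℕ → ℕ → Fin 3} {γ δ : Fin 3} (hδ : δ ≠ γ)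
    (hall : ∀ i j : ℕ, i < 3 → j < n → (C i j = γ ∨ C i j = δ)) (hsur : SJ n C) : False := by
  obtain ⟨ε, hε1, hε2⟩ := third_color γ δ (Ne.symm hδ)
  obtain ⟨i, j, hi, hj, hw⟩ := hsur ε
  rcases hall i j hi hj with h | h <;> rw [hw] at h
  · exact hε1 h
  · exact hε2 h

/-- flips preserve the hypotheses -/
lemma NR_flipH {n : ℕ} {C : ℕ → ℕ → Fin 3} (h : NR n C) :
    NR n (fun i j => C i (n - 1 - j)) := by
  intro i1 j1 i2 j2 i3 j3 hi1 hi2 hi3 hj1 hj2 hj3 hd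
  exact h i1 (n-1-j1) i2 (n-1-j2) i3 (n-1-j3) hi1 hi2 hi3 (by omega) (by omega) (by omega)
    (by simp only [nd] at *; omega)

lemma NR_flipV {n : ℕ} {C : ℕ → ℕ → Fin 3} (h : NR n C) :
    NR n (fun i j => C (2 - i) j) := by
  intro i1 j1 i2 j2 i3 j3 hi1 hi2 hi3 hj1 hj2 hj3 hd
  exact h (2-i1) j1 (2-i2) j2 (2-i3) j3 (by omega) (by omega) (by omega) hj1 hj2 hj3
    (by simp only [nd] at *; omega)

lemma SJ_flipH {n : ℕ} {C : ℕ → ℕ → Fin 3} (h : SJ n C) :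
    SJ n (fun i j => C i (n - 1 - j)) := by
  intro col
  obtain ⟨i, j, hi, hj, hc⟩ := h col
  exact ⟨i, n - 1 - j, hi, by omega, by simp only []; rw [show n-1-(n-1-j) = j by omega]; exact hc⟩

lemma SJ_flipV {n : ℕ} {C : ℕ → ℕ → Fin 3} (h : SJ n C) :
    SJ n (fun i j => C (2 - i) j) := by
  intro col
  obtain ⟨i, j, hi, hj, hc⟩ := h col
  exact ⟨2 - i, j, by omega, hj, by simp only []; rw [show 2-(2-i) = i by omega]; exact hc⟩

/-- Lemma I : `C 1 0 = γ` where `γ` avoids middle columns. -/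
lemma lemI {n : ℕ} (hn3 : 3 ≤ n) (C : ℕ → ℕ → Fin 3) (hNR : NR n C) (γ : Fin 3)
    (hmid : ∀ i j : ℕ, i < 3 → j < n → 1 ≤ j → j ≤ n - 2 → C i j ≠ γ)
    (h10 : C 1 0 = γ) (hsur : SJ n C) : False := by
  obtain ⟨δ, hδdef⟩ : ∃ δ, C 0 1 = δ := ⟨_, rfl⟩
  have hδ : δ ≠ γ := hδdef ▸ hmid 0 1 (by omega) (by omega) le_rfl (by omega)
  have h21 : C 2 1 = δ := by
    have h := hNR 1 0 2 1 0 1 (by omega) (by omega) (by omega) (by omega) (by omega) (by omega)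
      (by simp only [nd]; try omega)
    rw [h10, hδdef] at h
    rcases h with h | h | h
    · exact absurd h.symm (hmid 2 1 (by omega) (by omega) le_rfl (by omega))
    · exact h
    · exact absurd h hδ.symm
  have all : ∀ i j : ℕ, i < 3 → j < n → (C i j = γ ∨ C i j = δ) := by
    intro i j hi hj
    rcases Nat.lt_or_ge j 1 with hj1 | hj1
    · have hj0 : j = 0 := by omega
      subst hj0
      interval_cases i
      · have h := hNR 1 0 0 0 0 1 (by omega) (by omega) (by omega) (by omega) (by omega)
          (by omega) (by simp only [nd]; try omega)
        rw [h10, hδdef] at h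
        rcases h with h | h | h
        · exact Or.inl h.symm
        · exact Or.inr h
        · exact absurd h hδ.symm
      · exact Or.inl h10
      · have h := hNR 1 0 2 0 2 1 (by omega) (by omega) (by omega) (by omega) (by omega)
          (by omega) (by simp only [nd]; try omega)
        rw [h10, h21] at h
        rcases h with h | h | h
        · exact Or.inl h.symm
        · exact Or.inr h
        · exact absurd h hδ.symm
    · interval_cases i
      · have h := hNR 1 0 0 j 2 1 (by omega) (by omega) (by omega) (by omega) hj (by omega)
          (by simp only [nd]; try omega)
        rw [h10, h21] at h
        rcases h with h | h | h
        · exact Or.inl h.symm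
        · exact Or.inr h
        · exact absurd h hδ.symm
      · have h := hNR 1 0 1 j 0 1 (by omega) (by omega) (by omega) (by omega) hj (by omega)
          (by simp only [nd]; try omega)
        rw [h10, hδdef] at h
        rcases h with h | h | h
        · exact Or.inl h.symm
        · exact Or.inr h
        · exact absurd h hδ.symm
      · have h := hNR 1 0 2 j 0 1 (by omega) (by omega) (by omega) (by omega) hj (by omega)
          (by simp only [nd]; try omega)
        rw [h10, hδdef] at h
        rcases h with h | h | h
        · exact Or.inl h.symm
        · exact Or.inr h
        · exact absurd h hδ.symm
  exact two_colors_contra hδ all hsur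

/-- Lemma I, flipped: `C 1 (n-1) = γ`. -/
lemma lemI' {n : ℕ} (hn3 : 3 ≤ n) (C : ℕ → ℕ → Fin 3) (hNR : NR n C) (γ : Fin 3)
    (hmid : ∀ i j : ℕ, i < 3 → j < n → 1 ≤ j → j ≤ n - 2 → C i j ≠ γ)
    (h1n1 : C 1 (n - 1) = γ) (hsur : SJ n C) : False := by
  refine lemI hn3 (fun i j => C i (n - 1 - j)) (NR_flipH hNR) γ ?_ ?_ (SJ_flipH hsur)
  · intro i j hi hj hj1 hj2
    exact hmid i (n - 1 - j) hi (by omega) (by omega) (by omega)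
  · simpa using h1n1

/-- Case II.b : `C 0 0 = γ`, `C 2 0 = γ`, `C 1 0 = δ`, `C 1 1 = δ`. -/
lemma lemIIb {n : ℕ} (hn3 : 3 ≤ n) (C : ℕ → ℕ → Fin 3) (hNR : NR n C) (γ δ : Fin 3)
    (hδ : δ ≠ γ)
    (hmid : ∀ i j : ℕ, i < 3 → j < n → 1 ≤ j → j ≤ n - 2 → C i j ≠ γ)
    (h00 : C 0 0 = γ) (h11 : C 1 1 = δ) (hM0 : C 1 0 = δ) (hB0 : C 2 0 = γ)
    (hT : ∀ j : ℕ, j < n → 1 ≤ j → (C 0 j = γ ∨ C 0 j = δ))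
    (hTδ : ∀ j : ℕ, j < n → 1 ≤ j → j ≤ n - 2 → C 0 j = δ)
    (hsur : SJ n C) : False := by
  have hB : ∀ j : ℕ, j < n → 1 ≤ j → (C 2 j = γ ∨ C 2 j = δ) := by
    intro j hj hj1
    have h := hNR 2 0 2 j 1 1 (by omega) (by omega) (by omega) (by omega) hj (by omega)
      (by simp only [nd]; try omega)
    rw [hB0, h11] at h
    rcases h with h | h | h
    · exact Or.inl h.symm
    · exact Or.inr h
    · exact absurd h hδ.symm
  have hM : ∀ j : ℕ, j < n → (C 1 j = γ ∨ C 1 j = δ) := by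
    intro j hj
    rcases Nat.lt_or_ge j 2 with h2 | h2
    · interval_cases j
      · exact Or.inr hM0
      · exact Or.inr h11
    · have h0j : C 0 (j - 1) = δ := hTδ (j - 1) (by omega) (by omega) (by omega)
      have h := hNR 0 (j-1) 2 0 1 j (by omega) (by omega) (by omega) (by omega) (by omega) hj
        (by simp only [nd]; try omega)
      rw [h0j, hB0] at h
      rcases h with h | h | h
      · exact absurd h hδ
      · exact Or.inl h.symm
      · exact Or.inr h.symm
  rcases hM (n - 1) (by omega) with hMn | hMn
  · exact lemI' hn3 C hNR γ hmid hMn hsur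
  · refine two_colors_contra hδ ?_ hsur
    intro i j hi hj
    interval_cases i
    · rcases Nat.eq_zero_or_pos j with h | h
      · subst h; exact Or.inl h00
      · exact hT j hj h
    · exact hM j hj
    · rcases Nat.eq_zero_or_pos j with h | h
      · subst h; exact Or.inl hB0
      · exact hB j hj h

/-- Case II.c : `C 0 0 = γ`, `C 1 0 = δ`, `C 2 0 = δ`. -/
lemma lemIIc {n : ℕ} (hn3 : 3 ≤ n) (hodd : n % 2 = 1) (C : ℕ → ℕ → Fin 3)
    (hNR : NR n C) (γ δ : Fin 3) (hδ : δ ≠ γ)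
    (hmid : ∀ i j : ℕ, i < 3 → j < n → 1 ≤ j → j ≤ n - 2 → C i j ≠ γ)
    (h00 : C 0 0 = γ) (hM0 : C 1 0 = δ) (hB0 : C 2 0 = δ)
    (hT : ∀ j : ℕ, j < n → 1 ≤ j → (C 0 j = γ ∨ C 0 j = δ))
    (hTδ : ∀ j : ℕ, j < n → 1 ≤ j → j ≤ n - 2 → C 0 j = δ)
    (hsur : SJ n C) : False := by
  have hM : ∀ j : ℕ, j < n → (C 1 j = γ ∨ C 1 j = δ) := by
    intro j hj
    have h := hNR 0 0 1 j 2 0 (by omega) (by omega) (by omega) (by omega) hj (by omega)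
      (by simp only [nd]; try omega)
    rw [h00, hB0] at h
    rcases h with h | h | h
    · exact Or.inl h.symm
    · exact Or.inr h
    · exact absurd h hδ.symm
  rcases hM (n - 1) (by omega) with hMn | hMn
  · exact lemI' hn3 C hNR γ hmid hMn hsur
  · have hMδ : ∀ j : ℕ, j < n → C 1 j = δ := by
      intro j hj
      rcases Nat.lt_or_ge j (n - 1) with h | h
      · rcases Nat.eq_zero_or_pos j with h0 | h0
        · subst h0; exact hM0
        · rcases hM j hj with hh | hh
          · exact absurd hh (hmid 1 j (by omega) hj h0 (by omega))
          · exact hh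
      · have hj' : j = n - 1 := by omega
        subst hj'; exact hMn
    obtain ⟨ε, hε1, hε2⟩ := third_color γ δ (Ne.symm hδ)
    obtain ⟨i, h, hi, hh, hw'⟩ := hsur ε
    have hi2 : i = 2 := by
      interval_cases i
      · rcases Nat.eq_zero_or_pos h with h0 | h0
        · subst h0; rw [h00] at hw'; exact absurd hw'.symm hε1
        · rcases hT h hh h0 with hx | hx <;> rw [hw'] at hx
          · exact absurd hx hε1
          · exact absurd hx hε2
      · rw [hMδ h hh] at hw'; exact absurd hw'.symm hε2
      · rfl
    subst hi2
    have hpos : 1 ≤ h := by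
      rcases Nat.eq_zero_or_pos h with h0 | h0
      · subst h0; rw [hB0] at hw'; exact absurd hw'.symm hε2
      · exact h0
    rcases Nat.even_or_odd h with heven | hodd'
    · -- h even : AP ((0,0),(1,h/2),(2,h))
      obtain ⟨q, hq⟩ := heven
      have hx := hNR 0 0 1 q 2 h (by omega) (by omega) (by omega) (by omega) (by omega) hh
        (by simp only [nd]; try omega)
      rw [h00, hMδ q (by omega), hw'] at hx
      rcases hx with hx | hx | hx
      · exact hδ hx.symm
      · exact hε2 hx.symm
      · exact hε1 hx.symm
    · have hodd2 : h % 2 = 1 := Nat.odd_iff.mp hodd'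
      rcases Nat.lt_or_ge h (n - 3) with hlt | hge
      · -- h ≤ n-4 : AP ((0,h+2),(0,0),(2,h))
        have h0h : C 0 (h + 2) = δ := hTδ (h + 2) (by omega) (by omega) (by omega)
        have hx := hNR 0 (h+2) 0 0 2 h (by omega) (by omega) (by omega) (by omega) (by omega)
          hh (by simp only [nd]; try omega)
        rw [h0h, h00, hw'] at hx
        rcases hx with hx | hx | hx
        · exact hδ hx
        · exact hε1 hx.symm
        · exact hε2 hx.symm
      · -- h = n-2 : AP ((1,n-1),(0,0),(2,n-2))
        have hn2 : h = n - 2 := by omega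
        subst hn2
        have hx := hNR 1 (n-1) 0 0 2 (n-2) (by omega) (by omega) (by omega) (by omega)
          (by omega) hh (by simp only [nd]; try omega)
        rw [hMδ (n - 1) (by omega), h00, hw'] at hx
        rcases hx with hx | hx | hx
        · exact hδ hx
        · exact hε1 hx.symm
        · exact hε2 hx.symm

/-- Lemma II : `C 0 0 = γ`. -/
lemma lemII {n : ℕ} (hn3 : 3 ≤ n) (hodd : n % 2 = 1) (C : ℕ → ℕ → Fin 3)
    (hNR : NR n C) (γ : Fin 3)
    (hmid : ∀ i j : ℕ, i < 3 → j < n → 1 ≤ j → j ≤ n - 2 → C i j ≠ γ)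
    (h00 : C 0 0 = γ) (hsur : SJ n C) : False := by
  obtain ⟨δ, hδdef⟩ : ∃ δ, C 1 1 = δ := ⟨_, rfl⟩
  have hδ : δ ≠ γ := hδdef ▸ hmid 1 1 (by omega) (by omega) le_rfl (by omega)
  have hT : ∀ j : ℕ, j < n → 1 ≤ j → (C 0 j = γ ∨ C 0 j = δ) := by
    intro j hj hj1
    have h := hNR 0 0 0 j 1 1 (by omega) (by omega) (by omega) (by omega) hj (by omega)
      (by simp only [nd]; try omega)
    rw [h00, hδdef] at h
    rcases h with h | h | h
    · exact Or.inl h.symm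
    · exact Or.inr h
    · exact absurd h hδ.symm
  have hTδ : ∀ j : ℕ, j < n → 1 ≤ j → j ≤ n - 2 → C 0 j = δ := by
    intro j hj hj1 hj2
    rcases hT j hj hj1 with h | h
    · exact absurd h (hmid 0 j (by omega) hj hj1 hj2)
    · exact h
  have hM0 := hNR 0 0 1 0 1 1 (by omega) (by omega) (by omega) (by omega) (by omega) (by omega)
    (by simp only [nd]; try omega)
  rw [h00, hδdef] at hM0
  have hB0 := hNR 0 0 2 0 1 1 (by omega) (by omega) (by omega) (by omega) (by omega) (by omega)
    (by simp only [nd]; try omega)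
  rw [h00, hδdef] at hB0
  have hM0' : C 1 0 = γ ∨ C 1 0 = δ := by
    rcases hM0 with h | h | h
    · exact Or.inl h.symm
    · exact Or.inr h
    · exact absurd h hδ.symm
  have hB0' : C 2 0 = γ ∨ C 2 0 = δ := by
    rcases hB0 with h | h | h
    · exact Or.inl h.symm
    · exact Or.inr h
    · exact absurd h hδ.symm
  rcases hM0' with hM0'' | hM0''
  · exact lemI hn3 C hNR γ hmid hM0'' hsur
  rcases hB0' with hB0'' | hB0''
  · exact lemIIb hn3 C hNR γ δ hδ hmid h00 hδdef hM0'' hB0'' hT hTδ hsur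
  · exact lemIIc hn3 hodd C hNR γ δ hδ hmid h00 hM0'' hB0'' hT hTδ hsur

lemma fin3_cover : ∀ x y : Fin 3, (∀ col : Fin 3, col = x ∨ col = y) → False := by decide

/-- The crux lemma: some color appears only on the extreme columns. -/
lemma crux {n : ℕ} (hn3 : 3 ≤ n) (hodd : n % 2 = 1) (C : ℕ → ℕ → Fin 3)
    (hNR : NR n C) (γ : Fin 3)
    (hmid : ∀ i j : ℕ, i < 3 → j < n → 1 ≤ j → j ≤ n - 2 → C i j ≠ γ)
    (hex : ∃ i j : ℕ, i < 3 ∧ (j = 0 ∨ j = n - 1) ∧ C i j = γ)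
    (hsur : SJ n C) : False := by
  -- first reduce to j = 0 (flip horizontally if needed)
  obtain ⟨i, j, hi, hj01, hc⟩ := hex
  have hred : ∃ i : ℕ, i < 3 ∧ C i 0 = γ ∨ i < 3 ∧ (fun i j => C i (n - 1 - j)) i 0 = γ := by
    rcases hj01 with h | h
    · exact ⟨i, Or.inl ⟨hi, h ▸ hc⟩⟩
    · exact ⟨i, Or.inr ⟨hi, by simp only []; rw [show n - 1 - 0 = n - 1 by omega, ← h]; exact hc⟩⟩
  -- a helper applying the column-0 case analysis
  have main0 : ∀ D : ℕ → ℕ → Fin 3, NR n D →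
      (∀ i j : ℕ, i < 3 → j < n → 1 ≤ j → j ≤ n - 2 → D i j ≠ γ) →
      SJ n D → ∀ i0 : ℕ, i0 < 3 → D i0 0 = γ → False := by
    intro D hNRD hmidD hsurD i0 hi0 hD
    interval_cases i0
    · exact lemII hn3 hodd D hNRD γ hmidD hD hsurD
    · exact lemI hn3 D hNRD γ hmidD hD hsurD
    · refine lemII hn3 hodd (fun i j => D (2 - i) j) (NR_flipV hNRD) γ ?_ (by simpa using hD)
        (SJ_flipV hsurD)
      intro i' j' hi' hj' h1 h2
      exact hmidD (2 - i') j' (by omega) hj' h1 h2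
  obtain ⟨i0, hcase⟩ := hred
  rcases hcase with ⟨hi0, hD⟩ | ⟨hi0, hD⟩
  · exact main0 C hNR hmid hsur i0 hi0 hD
  · refine main0 (fun i j => C i (n - 1 - j)) (NR_flipH hNR) ?_ (SJ_flipH hsur) i0 hi0 hD
    intro i' j' hi' hj' h1 h2
    exact hmid i' (n - 1 - j') hi' (by omega) (by omega) (by omega)

/-- Main combinatorial theorem: the `3 × n` grid with `n` odd, `n ≥ 3`, admits no
rainbow-free surjective 3-coloring. -/
theorem gridMain : ∀ n : ℕ, 3 ≤ n → n % 2 = 1 →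
    ∀ C : ℕ → ℕ → Fin 3, NR n C → SJ n C → False := by
  intro n
  induction n using Nat.strong_induction_on with
  | _ n ih =>
    intro hn3 hodd C hNR hsur
    by_cases hall : ∀ col : Fin 3, ∃ i j : ℕ, i < 3 ∧ 1 ≤ j ∧ j ≤ n - 2 ∧ C i j = col
    · rcases Nat.lt_or_ge n 5 with h5 | h5
      · -- n = 3 : all colors in column 1
        have hn : n = 3 := by omega
        subst hn
        have hcover : ∀ col : Fin 3, col = C 0 1 ∨ col = C 1 1 ∨ col = C 2 1 := by
          intro col
          obtain ⟨i, j, hi, hj1, hj2, hc⟩ := hall col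
          have hj : j = 1 := by omega
          subst hj
          interval_cases i
          · exact Or.inl hc.symm
          · exact Or.inr (Or.inl hc.symm)
          · exact Or.inr (Or.inr hc.symm)
        have h := hNR 0 1 1 1 2 1 (by omega) (by omega) (by omega) (by omega) (by omega)
          (by omega) (by simp only [nd]; try omega)
        rcases h with h | h | h
        · refine fin3_cover (C 0 1) (C 2 1) ?_
          intro col
          rcases hcover col with hx | hx | hx
          · exact Or.inl hx
          · exact Or.inl (h ▸ hx)
          · exact Or.inr hx
        · refine fin3_cover (C 0 1) (C 1 1) ?_
          intro col
          rcases hcover col with hx | hx | hx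
          · exact Or.inl hx
          · exact Or.inr hx
          · exact Or.inr (h ▸ hx)
        · refine fin3_cover (C 0 1) (C 1 1) ?_
          intro col
          rcases hcover col with hx | hx | hx
          · exact Or.inl hx
          · exact Or.inr hx
          · exact Or.inl (h ▸ hx)
      · -- n ≥ 5 : strip the outer columns and use the induction hypothesis
        refine ih (n - 2) (by omega) (by omega) (by omega) (fun i j => C i (j + 1)) ?_ ?_
        · intro i1 j1 i2 j2 i3 j3 hi1 hi2 hi3 hj1 hj2 hj3 hd
          refine hNR i1 (j1+1) i2 (j2+1) i3 (j3+1) hi1 hi2 hi3 (by omega) (by omega) (by omega) ?_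
          simp only [nd] at *
          omega
        · intro col
          obtain ⟨i, j, hi, hj1, hj2, hc⟩ := hall col
          refine ⟨i, j - 1, hi, by omega, ?_⟩
          show C i (j - 1 + 1) = col
          rw [show j - 1 + 1 = j by omega]
          exact hc
    · push_neg at hall
      obtain ⟨γ, hγ⟩ := hall
      have hmid : ∀ i j : ℕ, i < 3 → j < n → 1 ≤ j → j ≤ n - 2 → C i j ≠ γ := by
        intro i j hi hj hj1 hj2 hc
        exact (hγ i j hi hj1 hj2) hc
      obtain ⟨i, j, hi, hj, hc⟩ := hsur γ
      have hj01 : j = 0 ∨ j = n - 1 := by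
        by_contra hcon
        push_neg at hcon
        exact hmid i j hi hj (by omega) (by omega) hc
      exact crux hn3 hodd C hNR γ hmid ⟨i, j, hi, hj01, hc⟩ hsur

open SimpleGraph

/-! ### Distances in path graphs and their box products -/

lemma walk_len_ge {n : ℕ} {a b : Fin n} (w : (pathGraph n).Walk a b) :
    nd a.val b.val ≤ w.length := by
  induction w with
  | nil => simp only [Walk.length_nil, nd]; omega
  | cons h w ih =>
    have hadj := (pathGraph_adj).mp h
    simp only [Walk.length_cons, nd] at *
    omega

lemma pathGraph_dist_le {n : ℕ} : ∀ (t : ℕ) (a b : Fin n), b.val = a.val + t →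
    (pathGraph n).dist a b ≤ t := by
  intro t
  induction t with
  | zero => intro a b h; have : a = b := Fin.ext (by omega); subst this; simp
  | succ t ih =>
    intro a b h
    have ha' : a.val + 1 < n := by omega
    set a' : Fin n := ⟨a.val + 1, ha'⟩ with ha'def
    have hadj : (pathGraph n).Adj a a' := pathGraph_adj.mpr (Or.inl rfl)
    have hconn : (pathGraph n).Connected := by
      obtain ⟨m, rfl⟩ : ∃ m, n = m + 1 := ⟨n - 1, by omega⟩
      exact pathGraph_connected m
    calc (pathGraph n).dist a b ≤ (pathGraph n).dist a a' + (pathGraph n).dist a' b :=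
          hconn.dist_triangle
    _ ≤ 1 + t := by
        have h1 : (pathGraph n).dist a a' = 1 := dist_eq_one_iff_adj.mpr hadj
        have h2 := ih a' b (by simp [ha'def]; omega)
        omega
    _ = t + 1 := by omega

lemma pathGraph_dist {n : ℕ} (a b : Fin n) :
    (pathGraph n).dist a b = nd a.val b.val := by
  have hconn : (pathGraph n).Connected := by
    obtain ⟨m, rfl⟩ : ∃ m, n = m + 1 := ⟨n - 1, by have := a.2; omega⟩
    exact pathGraph_connected m
  refine le_antisymm ?_ ?_
  · rcases le_total a.val b.val with h | h
    · have h2 := pathGraph_dist_le (b.val - a.val) a b (by omega)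
      have h3 : nd a.val b.val = b.val - a.val := by simp only [nd]; omega
      omega
    · have h2 := pathGraph_dist_le (a.val - b.val) b a (by omega)
      rw [dist_comm]
      have h3 : nd a.val b.val = a.val - b.val := by simp only [nd]; omega
      omega
  · obtain ⟨w, hw⟩ := hconn.exists_walk_length_eq_dist a b
    have := walk_len_ge w
    omega

section BoxDist
variable {α β : Type*} {G : SimpleGraph α} {H : SimpleGraph β}

lemma boxProd_walk_len_ge (hG : G.Connected) (hH : H.Connected) :
    ∀ {x y : α × β} (w : (G □ H).Walk x y),
    G.dist x.1 y.1 + H.dist x.2 y.2 ≤ w.length := by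
  intro x y w
  induction w with
  | nil => simp
  | @cons x z y h w ih =>
    rcases h with ⟨h1, h2⟩ | ⟨h1, h2⟩
    · have t1 : G.dist x.1 y.1 ≤ 1 + G.dist z.1 y.1 := by
        calc G.dist x.1 y.1 ≤ G.dist x.1 z.1 + G.dist z.1 y.1 := hG.dist_triangle
        _ ≤ 1 + G.dist z.1 y.1 := by
            have := dist_eq_one_iff_adj.mpr h1; omega
      have t2 : H.dist x.2 y.2 = H.dist z.2 y.2 := by rw [h2]
      show _ ≤ w.length + 1
      omega
    · have t1 : H.dist x.2 y.2 ≤ 1 + H.dist z.2 y.2 := by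
        calc H.dist x.2 y.2 ≤ H.dist x.2 z.2 + H.dist z.2 y.2 := hH.dist_triangle
        _ ≤ 1 + H.dist z.2 y.2 := by
            have := dist_eq_one_iff_adj.mpr h1; omega
      have t2 : G.dist x.1 y.1 = G.dist z.1 y.1 := by rw [h2]
      show _ ≤ w.length + 1
      omega

lemma boxProd_dist (hG : G.Connected) (hH : H.Connected) (x y : α × β) :
    (G □ H).dist x y = G.dist x.1 y.1 + H.dist x.2 y.2 := by
  refine le_antisymm ?_ ?_
  · obtain ⟨w1, hw1⟩ := hG.exists_walk_length_eq_dist x.1 y.1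
    obtain ⟨w2, hw2⟩ := hH.exists_walk_length_eq_dist x.2 y.2
    obtain ⟨x1, x2⟩ := x
    obtain ⟨y1, y2⟩ := y
    have hle := dist_le ((w1.boxProdLeft (H := H) x2).append (w2.boxProdRight G y1))
    simp only [Walk.length_append, Walk.boxProdLeft, Walk.boxProdRight, Walk.length_map] at hle
    simp only [] at hw1 hw2 ⊢
    have hlen : ((w1.boxProdLeft (H := H) x2).append (w2.boxProdRight G y1)).length
        = w1.length + w2.length := by
      rw [Walk.length_append]
      exact congrArg₂ (· + ·) (Walk.length_map _ _) (Walk.length_map _ _)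
    have hle2 : (G □ H).dist (x1, x2) (y1, y2) ≤ w1.length + w2.length := by
      have := dist_le ((w1.boxProdLeft (H := H) x2).append (w2.boxProdRight G y1))
      rw [hlen] at this
      exact this
    omega
  · obtain ⟨w, hw⟩ := ((hG.boxProd hH).exists_walk_length_eq_dist x y)
    have := boxProd_walk_len_ge hG hH w
    omega

end BoxDist

lemma grid_dist {n : ℕ} (hn : 1 ≤ n) (x y : Fin 3 × Fin n) :
    (pathGraph 3 □ pathGraph n).dist x y = nd x.1.val y.1.val + nd x.2.val y.2.val := by
  have hG : (pathGraph 3).Connected := pathGraph_connected 2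
  have hH : (pathGraph n).Connected := by
    obtain ⟨m, rfl⟩ : ∃ m, n = m + 1 := ⟨n - 1, by omega⟩
    exact pathGraph_connected m
  rw [boxProd_dist hG hH, pathGraph_dist, pathGraph_dist]

/-! ### The bridge -/

lemma main_rainbow {k : ℕ} (hk : 1 ≤ k) (c : Fin 3 × Fin (2 * k + 1) → Fin 3)
    (hsur : Function.Surjective c) :
    HasRainbowAP (pathGraph 3 □ pathGraph (2 * k + 1)) 3 c := by
  by_contra hno
  have hn3 : 3 ≤ 2 * k + 1 := by omega
  have hodd : (2 * k + 1) % 2 = 1 := by omega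
  set C : ℕ → ℕ → Fin 3 := fun i j =>
    if h : i < 3 ∧ j < 2 * k + 1 then c (⟨i, h.1⟩, ⟨j, h.2⟩) else 0 with hCdef
  have eC : ∀ (i j : ℕ) (hi : i < 3) (hj : j < 2 * k + 1),
      C i j = c (⟨i, hi⟩, ⟨j, hj⟩) := by
    intro i j hi hj
    simp only [hCdef, dif_pos (⟨hi, hj⟩ : i < 3 ∧ j < 2 * k + 1)]
  refine gridMain (2 * k + 1) hn3 hodd C ?_ ?_
  · intro i1 j1 i2 j2 i3 j3 hi1 hi2 hi3 hj1 hj2 hj3 hd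
    by_contra hcol
    push_neg at hcol
    obtain ⟨h12, h23, h13⟩ := hcol
    rw [eC i1 j1 hi1 hj1, eC i2 j2 hi2 hj2] at h12
    rw [eC i2 j2 hi2 hj2, eC i3 j3 hi3 hj3] at h23
    rw [eC i1 j1 hi1 hj1, eC i3 j3 hi3 hj3] at h13
    set x : Fin 3 × Fin (2 * k + 1) := (⟨i1, hi1⟩, ⟨j1, hj1⟩) with hx
    set y : Fin 3 × Fin (2 * k + 1) := (⟨i2, hi2⟩, ⟨j2, hj2⟩) with hy
    set z : Fin 3 × Fin (2 * k + 1) := (⟨i3, hi3⟩, ⟨j3, hj3⟩) with hz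
    apply hno
    refine ⟨![x, y, z], ⟨nd i1 i2 + nd j1 j2, ?_⟩, ?_⟩
    · intro i h
      have hi01 : i = 0 ∨ i = 1 := by omega
      rcases hi01 with rfl | rfl
      · show (pathGraph 3 □ pathGraph (2 * k + 1)).dist x y = nd i1 i2 + nd j1 j2
        rw [grid_dist (by omega)]
      · show (pathGraph 3 □ pathGraph (2 * k + 1)).dist y z = nd i1 i2 + nd j1 j2
        rw [grid_dist (by omega)]
        exact hd.symm
    · intro a b hab
      fin_cases a <;> fin_cases b
      · rfl
      · exact absurd hab h12
      · exact absurd hab h13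
      · exact absurd hab.symm h12
      · rfl
      · exact absurd hab h23
      · exact absurd hab.symm h13
      · exact absurd hab.symm h23
      · rfl
  · intro col
    obtain ⟨x, hx⟩ := hsur col
    exact ⟨x.1.val, x.2.val, x.1.isLt, x.2.isLt, by rw [eC _ _ x.1.isLt x.2.isLt]; exact hx⟩


end AWProof

/-- for every `k ≥ 1`, `aw(P_3 □ P_{2k+1}, 3) = 3`. -/
theorem aw_p3_podd (k : ℕ) (hk : 1 ≤ k) :
    aw (pathGraph 3 □ pathGraph (2 * k + 1)) 3 = 3 := by
  classical
  unfold aw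
  set S : Set ℕ := {r : ℕ | 0 < r ∧ ∀ c : (Fin 3 × Fin (2 * k + 1)) → Fin r,
    Function.Surjective c → HasRainbowAP (pathGraph 3 □ pathGraph (2 * k + 1)) 3 c} with hS
  have h3 : 3 ∈ S := by
    constructor
    · norm_num
    · intro c hc
      exact main_rainbow hk c hc
  have hne : S.Nonempty := ⟨3, h3⟩
  have hmem := Nat.sInf_mem hne
  have hle : sInf S ≤ 3 := Nat.sInf_le h3
  have x0 : Fin 3 × Fin (2 * k + 1) := ((0 : Fin 3), ⟨0, by omega⟩)
  rcases (show sInf S = 0 ∨ sInf S = 1 ∨ sInf S = 2 ∨ sInf S = 3 by omega) with h | h | h | h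
  · rw [h] at hmem
    exact absurd hmem.1 (lt_irrefl 0)
  · rw [h] at hmem
    have hsur1 : Function.Surjective (fun _ : Fin 3 × Fin (2 * k + 1) => (0 : Fin 1)) :=
      fun y => ⟨((0 : Fin 3), ⟨0, by omega⟩), Subsingleton.elim _ _⟩
    obtain ⟨v, -, hinj⟩ := hmem.2 _ hsur1
    exact absurd (hinj (a₁ := 0) (a₂ := 1) (Subsingleton.elim _ _)) (by decide)
  · rw [h] at hmem
    haveI : NeZero (2 * k + 1) := ⟨by omega⟩
    have hne01 : ((1 : Fin 3), (0 : Fin (2 * k + 1))) ≠ ((0 : Fin 3), (0 : Fin (2 * k + 1))) := by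
      intro heq
      have h1 : (1 : Fin 3) = 0 := congrArg Prod.fst heq
      exact absurd h1 (by decide)
    have hsur2 : Function.Surjective
        (fun x : Fin 3 × Fin (2 * k + 1) =>
          if x = ((0 : Fin 3), (0 : Fin (2 * k + 1))) then (1 : Fin 2) else 0) := by
      intro y
      obtain ⟨yv, hyv⟩ := y
      interval_cases yv
      · refine ⟨((1 : Fin 3), (0 : Fin (2 * k + 1))), ?_⟩
        show (if ((1 : Fin 3), (0 : Fin (2 * k + 1))) = ((0 : Fin 3), (0 : Fin (2 * k + 1)))
          then (1 : Fin 2) else 0) = ⟨0, hyv⟩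
        rw [if_neg hne01]
        rfl
      · refine ⟨((0 : Fin 3), (0 : Fin (2 * k + 1))), ?_⟩
        show (if ((0 : Fin 3), (0 : Fin (2 * k + 1))) = ((0 : Fin 3), (0 : Fin (2 * k + 1)))
          then (1 : Fin 2) else 0) = ⟨1, hyv⟩
        rw [if_pos rfl]
        rfl
    obtain ⟨v, -, hinj⟩ := hmem.2 _ hsur2
    have hcard := Fintype.card_le_of_injective _ hinj
    simp only [Fintype.card_fin] at hcard
    omega
  · exact h
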